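/- Let H(t,ξ) be the Zaremba Green function of the lower half-plane, fix ξ with Im ξ < 0 and ξ ≠ 0, and fix μ with −1/2 < μ < 0. Let U be a complex-valued C¹ function on the punctured closed lower half-disc {t : Im t ≤ 0, 0 < |t| ≤ |ξ|/2} such that U(t) = o(|t|^μ) and the radial derivative satisfies (∂/∂ρ)U(ρ e^{iθ}) = o(ρ^{μ−1}) as ρ → 0, uniformly in θ ∈ [−π, 0]. Then the boundary integral over the small semicircular arc Γ_δ = {δ e^{iθ} : −π ≤ θ ≤ 0} tends to zero: ∫_{−π}^{0} [ U(δ e^{iθ}) (∂/∂ρ)H(δ e^{iθ}, ξ) − H(δ e^{iθ}, ξ) (∂/∂ρ)U(δ e^{iθ}) ] δ dθ → 0 as δ → 0⁺. -/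

import Mathlib

open Complex Real

noncomputable def branchAngle (w : ℂ) : ℝ :=
  if Complex.arg w = Real.pi then -Real.pi else Complex.arg w

noncomputable def zsqrt (w : ℂ) : ℂ :=
  (Real.sqrt (‖w‖) : ℂ) * Complex.exp (Complex.I * (branchAngle w / 2))

lemma exp_I_branchAngle (w : ℂ) : Complex.exp (Complex.I * branchAngle w) = Complex.exp (Complex.I * Complex.arg w) := by
  unfold branchAngle
  split_ifs with h
  · rw [h]
    push_cast
    rw [show Complex.I * -(Real.pi:ℂ) = Real.pi * Complex.I - 2 * Real.pi * Complex.I by ring,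
        Complex.exp_sub, show ((2:ℂ) * Real.pi * Complex.I) = 2 * Real.pi * Complex.I by ring,
        Complex.exp_two_pi_mul_I, show Complex.I * (Real.pi:ℂ) = Real.pi * Complex.I by ring]
    simp
  · rfl

lemma zsqrt_sq (w : ℂ) : (zsqrt w) ^ 2 = w := by
  unfold zsqrt
  rw [mul_pow, ← Complex.exp_nat_mul]
  rw [show ((2:ℕ):ℂ) * (Complex.I * (branchAngle w / 2)) = Complex.I * branchAngle w by push_cast; ring]
  rw [exp_I_branchAngle]
  rw [show ((Real.sqrt (‖w‖) : ℂ))^2 = ((Real.sqrt (‖w‖) ^ 2 : ℝ) : ℂ) by push_cast; ring]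
  rw [Real.sq_sqrt (norm_nonneg w)]
  rw [show Complex.I * (Complex.arg w : ℂ) = (Complex.arg w : ℂ) * Complex.I by ring]
  exact Complex.norm_mul_exp_arg_mul_I w

lemma abs_zsqrt (w : ℂ) : ‖zsqrt w‖ = Real.sqrt (‖w‖) := by
  unfold zsqrt
  rw [norm_mul, Complex.norm_real, Real.norm_eq_abs, _root_.abs_of_nonneg (Real.sqrt_nonneg _),
    show Complex.I * ((branchAngle w : ℂ)/2) = ((branchAngle w / 2 : ℝ) : ℂ) * Complex.I by push_cast; ring,
    Complex.norm_exp_ofReal_mul_I, mul_one]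

lemma zsqrt_ne_zero (w : ℂ) (hw : w ≠ 0) : zsqrt w ≠ 0 := by
  intro h
  apply hw
  rw [← zsqrt_sq w, h]; ring

lemma zsqrt_polar (ρ θ : ℝ) (hρ : 0 ≤ ρ) (h1 : -Real.pi ≤ θ) (h2 : θ ≤ 0) :
    zsqrt ((ρ : ℂ) * Complex.exp (Complex.I * θ)) =
      (Real.sqrt ρ : ℂ) * Complex.exp (Complex.I * (θ/2)) := by
  rcases eq_or_lt_of_le hρ with h | h
  · simp [zsqrt, ← h]
  have habs : ‖(ρ : ℂ) * Complex.exp (Complex.I * θ)‖ = ρ := by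
    rw [norm_mul, Complex.norm_real, Real.norm_eq_abs, _root_.abs_of_pos h,
      show Complex.I * (θ:ℂ) = ((θ:ℝ):ℂ) * Complex.I by ring, Complex.norm_exp_ofReal_mul_I, mul_one]
  have hba : branchAngle ((ρ : ℂ) * Complex.exp (Complex.I * θ)) = θ := by
    rcases eq_or_lt_of_le h1 with hpi | hpi
    · -- θ = -π
      have : Complex.exp (Complex.I * θ) = -1 := by
        rw [← hpi]
        push_cast
        rw [show Complex.I * -(Real.pi:ℂ) = -(Real.pi * Complex.I) by ring, Complex.exp_neg,
          Complex.exp_pi_mul_I]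
        norm_num
      rw [this]
      have harg : Complex.arg ((ρ:ℂ) * (-1)) = Real.pi := by
        rw [show (ρ:ℂ) * (-1) = ((-ρ : ℝ) : ℂ) by push_cast; ring]
        exact Complex.arg_ofReal_of_neg (by linarith)
      unfold branchAngle
      rw [harg, if_pos rfl, ← hpi]
    · -- -π < θ ≤ 0
      have harg : Complex.arg ((ρ:ℂ) * Complex.exp (Complex.I * θ)) = θ := by
        rw [Complex.arg_real_mul _ h]
        rw [show Complex.I * (θ:ℂ) = (θ:ℂ) * Complex.I by ring, Complex.exp_mul_I]
        have := Complex.arg_cos_add_sin_mul_I (θ := θ) ⟨hpi, by linarith [Real.pi_pos]⟩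
        exact_mod_cast this
      unfold branchAngle
      rw [harg, if_neg (by intro hc; rw [hc] at h2; linarith [Real.pi_pos])]
  unfold zsqrt
  rw [habs, hba]

noncomputable def Llog (c a : ℂ) (s : ℝ) : ℝ := Real.log (‖(s:ℂ)*c - a‖)

noncomputable def Ld (c a : ℂ) (s : ℝ) : ℝ :=
  (((s:ℂ)*c - a).re * c.re + ((s:ℂ)*c - a).im * c.im) / Complex.normSq ((s:ℂ)*c - a)

lemma normSq_eval (c a : ℂ) (s : ℝ) :
    Complex.normSq ((s:ℂ)*c - a) = (s*c.re - a.re)^2 + (s*c.im - a.im)^2 := by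
  simp [Complex.normSq_apply, Complex.sub_re, Complex.sub_im, Complex.mul_re, Complex.mul_im]
  ring

lemma hasDerivAt_Llog (c a : ℂ) (s : ℝ) (h : (s:ℂ)*c - a ≠ 0) :
    HasDerivAt (Llog c a) (Ld c a s) s := by
  have hN : ∀ x : ℝ, Llog c a x = Real.log ((x*c.re - a.re)^2 + (x*c.im - a.im)^2) / 2 := by
    intro x
    rw [← normSq_eval, ← Complex.sq_norm, Real.log_pow]
    rw [Llog]; push_cast; ring
  have hNd : HasDerivAt (fun x : ℝ => (x*c.re - a.re)^2 + (x*c.im - a.im)^2)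
      (2*(s*c.re - a.re)*c.re + 2*(s*c.im - a.im)*c.im) s := by
    have h1 : HasDerivAt (fun x : ℝ => (x*c.re - a.re)^2) (2*(s*c.re - a.re)*c.re) s := by
      have := (((hasDerivAt_id s).mul_const c.re).sub_const a.re).fun_pow 2
      exact this.congr_deriv (by simp only [id_eq]; push_cast; ring)
    have h2 : HasDerivAt (fun x : ℝ => (x*c.im - a.im)^2) (2*(s*c.im - a.im)*c.im) s := by
      have := (((hasDerivAt_id s).mul_const c.im).sub_const a.im).fun_pow 2
      exact this.congr_deriv (by simp only [id_eq]; push_cast; ring)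
    exact h1.add h2
  have hne : (s*c.re - a.re)^2 + (s*c.im - a.im)^2 ≠ 0 := by
    rw [← normSq_eval]
    simpa [Complex.normSq_eq_zero] using h
  have := ((Real.hasDerivAt_log hne).comp s hNd).div_const 2
  have heq : Ld c a s = ((s*c.re - a.re)^2 + (s*c.im - a.im)^2)⁻¹ *
      (2*(s*c.re - a.re)*c.re + 2*(s*c.im - a.im)*c.im) / 2 := by
    rw [Ld, normSq_eval]
    have : (((s:ℂ)*c - a).re) = s*c.re - a.re := by
      simp [Complex.sub_re, Complex.mul_re]
    rw [this]
    have : (((s:ℂ)*c - a).im) = s*c.im - a.im := by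
      simp [Complex.sub_im, Complex.mul_im]
    rw [this]
    field_simp
  rw [heq]
  exact this.congr_of_eventuallyEq (Filter.Eventually.of_forall fun x => hN x)

lemma Ld_bound (c a : ℂ) (s : ℝ) (hc : ‖c‖ = 1) (h : (s:ℂ)*c - a ≠ 0) :
    |Ld c a s| ≤ (‖(s:ℂ)*c - a‖)⁻¹ := by
  set z := (s:ℂ)*c - a with hz
  have hzpos : 0 < ‖z‖ := norm_pos_iff.mpr h
  have h1 : |z.re * c.re + z.im * c.im| ≤ ‖z‖ := by
    have hnum : z.re * c.re + z.im * c.im = ((starRingEnd ℂ) z * c).re := by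
      simp [Complex.mul_re]
    rw [hnum]
    calc |((starRingEnd ℂ) z * c).re| ≤ ‖(starRingEnd ℂ) z * c‖ :=
          Complex.abs_re_le_norm _
    _ = ‖z‖ := by rw [norm_mul, Complex.norm_conj, hc, mul_one]
  have h2 : |Ld c a s| = |z.re * c.re + z.im * c.im| / (‖z‖ ^ 2) := by
    rw [Ld, ← hz, abs_div, Complex.normSq_eq_norm_sq, _root_.abs_of_nonneg (sq_nonneg (‖z‖))]
  rw [h2]
  calc |z.re * c.re + z.im * c.im| / (‖z‖ ^ 2)
      ≤ ‖z‖ / (‖z‖ ^ 2) := by gcongr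
  _ = (‖z‖)⁻¹ := by field_simp [pow_two]

lemma abs_polar (ρ θ : ℝ) (hρ : 0 ≤ ρ) : ‖(ρ:ℂ) * Complex.exp (Complex.I * θ)‖ = ρ := by
  rw [norm_mul, Complex.norm_real, Real.norm_eq_abs, _root_.abs_of_nonneg hρ,
    show Complex.I * (θ:ℂ) = ((θ:ℝ):ℂ) * Complex.I by ring, Complex.norm_exp_ofReal_mul_I, mul_one]

lemma im_polar (ρ θ : ℝ) : ((ρ:ℂ) * Complex.exp (Complex.I * θ)).im = ρ * Real.sin θ := by
  rw [show Complex.I * (θ:ℂ) = ((θ:ℝ):ℂ) * Complex.I by ring]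
  simp [Complex.mul_im, Complex.exp_ofReal_mul_I_re, Complex.exp_ofReal_mul_I_im]

lemma abs_exp_I_half (θ : ℝ) : ‖Complex.exp (Complex.I * (θ/2 : ℝ))‖ = 1 := by
  rw [show Complex.I * ((θ/2:ℝ):ℂ) = ((θ/2:ℝ):ℂ) * Complex.I by ring, Complex.norm_exp_ofReal_mul_I]

lemma sub_ne_far (c a : ℂ) (s m : ℝ) (hc : ‖c‖ = 1) (hm : ‖a‖ = m)
    (hs : |s| < m) : (s:ℂ)*c - a ≠ 0 := by
  intro h
  have h1 : (s:ℂ)*c = a := sub_eq_zero.mp h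
  have h2 : ‖(s:ℂ)*c‖ = |s| := by
    rw [norm_mul, hc, mul_one, Complex.norm_real, Real.norm_eq_abs]
  rw [h1, hm] at h2
  rw [← h2] at hs
  exact lt_irrefl _ hs

lemma far_lemma (c a : ℂ) (s m : ℝ) (hc : ‖c‖ = 1) (ha : m ≤ ‖a‖)
    (hs : |s| ≤ m/2) : m/2 ≤ ‖(s:ℂ)*c - a‖ := by
  have h1 : ‖(s:ℂ)*c‖ = |s| := by
    rw [norm_mul, hc, mul_one, Complex.norm_real, Real.norm_eq_abs]
  have h2 : ‖a‖ - ‖(s:ℂ)*c‖ ≤ ‖(s:ℂ)*c - a‖ := by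
    have := norm_sub_norm_le a ((s:ℂ)*c)
    rw [norm_sub_rev] at this
    simpa using this
  rw [h1] at h2
  linarith

noncomputable def gfun (ξ c : ℂ) (s : ℝ) : ℝ :=
  -(1/(2*Real.pi)) * (Llog c (zsqrt ξ) s - Llog c (-(zsqrt ξ)) s
    + Llog c (-(zsqrt ((starRingEnd ℂ) ξ))) s - Llog c (zsqrt ((starRingEnd ℂ) ξ)) s)

noncomputable def gd (ξ c : ℂ) (s : ℝ) : ℝ :=
  -(1/(2*Real.pi)) * (Ld c (zsqrt ξ) s - Ld c (-(zsqrt ξ)) s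
    + Ld c (-(zsqrt ((starRingEnd ℂ) ξ))) s - Ld c (zsqrt ((starRingEnd ℂ) ξ)) s)

lemma hasDerivAt_gfun (ξ c : ℂ) (s : ℝ)
    (h1 : (s:ℂ)*c - zsqrt ξ ≠ 0) (h2 : (s:ℂ)*c - (-(zsqrt ξ)) ≠ 0)
    (h3 : (s:ℂ)*c - (-(zsqrt ((starRingEnd ℂ) ξ))) ≠ 0)
    (h4 : (s:ℂ)*c - zsqrt ((starRingEnd ℂ) ξ) ≠ 0) :
    HasDerivAt (gfun ξ c) (gd ξ c s) s := by
  have := ((((hasDerivAt_Llog c _ s h1).sub (hasDerivAt_Llog c _ s h2)).add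
    (hasDerivAt_Llog c _ s h3)).sub (hasDerivAt_Llog c _ s h4)).const_mul (-(1/(2*Real.pi)))
  exact this

lemma gfun_zero (ξ c : ℂ) : gfun ξ c 0 = 0 := by
  simp [gfun, Llog]

lemma zsqrt_abs_eq (ξ : ℂ) : ‖zsqrt ((starRingEnd ℂ) ξ)‖ = Real.sqrt (‖ξ‖) := by
  rw [abs_zsqrt, Complex.norm_conj]

lemma gd_bound (ξ c : ℂ) (s : ℝ) (hc : ‖c‖ = 1) (hξ0 : ξ ≠ 0)
    (hs : |s| ≤ Real.sqrt (‖ξ‖) / 2) :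
    |gd ξ c s| ≤ 4 / (Real.pi * Real.sqrt (‖ξ‖)) := by
  set m := Real.sqrt (‖ξ‖) with hmdef
  have hm : 0 < m := Real.sqrt_pos.mpr (norm_pos_iff.mpr hξ0)
  have hbd : ∀ a : ℂ, ‖a‖ = m → |Ld c a s| ≤ 2 / m := by
    intro a ha
    have hfar : m/2 ≤ ‖(s:ℂ)*c - a‖ := far_lemma c a s m hc ha.ge hs
    have hne : (s:ℂ)*c - a ≠ 0 := by
      intro h; rw [h] at hfar; simp at hfar; linarith
    calc |Ld c a s| ≤ (‖(s:ℂ)*c - a‖)⁻¹ := Ld_bound c a s hc hne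
    _ ≤ (m/2)⁻¹ := by
        apply inv_anti₀ (by linarith) hfar
    _ = 2 / m := by rw [inv_div]
  have b1 := hbd (zsqrt ξ) (abs_zsqrt ξ)
  have b2 := hbd (-(zsqrt ξ)) (by rw [norm_neg, abs_zsqrt])
  have b3 := hbd (-(zsqrt ((starRingEnd ℂ) ξ))) (by rw [norm_neg, zsqrt_abs_eq])
  have b4 := hbd (zsqrt ((starRingEnd ℂ) ξ)) (zsqrt_abs_eq ξ)
  rw [gd, abs_mul, abs_neg, _root_.abs_of_pos (by positivity : (0:ℝ) < 1/(2*Real.pi))]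
  have hsum : |Ld c (zsqrt ξ) s - Ld c (-(zsqrt ξ)) s
      + Ld c (-(zsqrt ((starRingEnd ℂ) ξ))) s - Ld c (zsqrt ((starRingEnd ℂ) ξ)) s| ≤ 8 / m := by
    rw [abs_le] at b1 b2 b3 b4 ⊢
    have h2m : 8/m = 2/m + 2/m + 2/m + 2/m := by ring
    constructor <;> [linarith [b1.1, b1.2, b2.1, b2.2, b3.1, b3.2, b4.1, b4.2];
      linarith [b1.1, b1.2, b2.1, b2.2, b3.1, b3.2, b4.1, b4.2]]
  calc 1/(2*Real.pi) * |_| ≤ 1/(2*Real.pi) * (8/m) := by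
        apply mul_le_mul_of_nonneg_left hsum (by positivity)
  _ = 4 / (Real.pi * m) := by field_simp; ring

/-- The Zaremba Green function of the lower half-plane. -/
noncomputable def ZH (t ξ : ℂ) : ℝ :=
  -(1 / (2 * Real.pi)) *
    (Real.log (‖t - ξ‖) + Real.log (‖t - (starRingEnd ℂ) ξ‖)
      - 2 * Real.log (‖zsqrt t + zsqrt ξ‖)
      - 2 * Real.log (‖zsqrt t - zsqrt ((starRingEnd ℂ) ξ)‖))

/-- Radial derivative in ρ of H(ρe^{iθ}, ξ). -/
noncomputable def ZHrad (ξ : ℂ) (θ ρ : ℝ) : ℝ :=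
  deriv (fun r : ℝ => ZH ((r : ℂ) * Complex.exp (Complex.I * θ)) ξ) ρ

/-- Radial derivative in ρ of a function U evaluated at ρe^{iθ}. -/
noncomputable def radDeriv (U : ℂ → ℂ) (θ ρ : ℝ) : ℂ :=
  deriv (fun r : ℝ => U ((r : ℂ) * Complex.exp (Complex.I * θ))) ρ

lemma ZH_eq (ξ t : ℂ) (hξ0 : ξ ≠ 0) (ht : ‖t‖ < ‖ξ‖) :
    ZH t ξ = -(1/(2*Real.pi)) * (Real.log (‖zsqrt t - zsqrt ξ‖)
      - Real.log (‖zsqrt t + zsqrt ξ‖)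
      + Real.log (‖zsqrt t + zsqrt ((starRingEnd ℂ) ξ)‖)
      - Real.log (‖zsqrt t - zsqrt ((starRingEnd ℂ) ξ)‖)) := by
  have hst : ‖zsqrt t‖ < Real.sqrt (‖ξ‖) := by
    rw [abs_zsqrt]; exact Real.sqrt_lt_sqrt (norm_nonneg t) ht
  have hne : ∀ u : ℂ, ‖u‖ = Real.sqrt (‖ξ‖) →
      zsqrt t - u ≠ 0 ∧ zsqrt t + u ≠ 0 := by
    intro u hu
    constructor
    · intro h
      have h1 : zsqrt t = u := sub_eq_zero.mp h
      rw [h1, hu] at hst; exact lt_irrefl _ hst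
    · intro h
      have h1 : zsqrt t = -u := eq_neg_of_add_eq_zero_left h
      rw [h1, norm_neg, hu] at hst; exact lt_irrefl _ hst
  obtain ⟨hna1, hna2⟩ := hne (zsqrt ξ) (abs_zsqrt ξ)
  obtain ⟨hnb1, hnb2⟩ := hne (zsqrt ((starRingEnd ℂ) ξ)) (zsqrt_abs_eq ξ)
  have hfac1 : t - ξ = (zsqrt t - zsqrt ξ) * (zsqrt t + zsqrt ξ) := by
    linear_combination -(zsqrt_sq t) + zsqrt_sq ξ
  have hfac2 : t - (starRingEnd ℂ) ξ =
      (zsqrt t - zsqrt ((starRingEnd ℂ) ξ)) * (zsqrt t + zsqrt ((starRingEnd ℂ) ξ)) := by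
    linear_combination -(zsqrt_sq t) + zsqrt_sq ((starRingEnd ℂ) ξ)
  have hlog1 : Real.log (‖t - ξ‖) =
      Real.log (‖zsqrt t - zsqrt ξ‖) + Real.log (‖zsqrt t + zsqrt ξ‖) := by
    rw [hfac1, norm_mul, Real.log_mul (norm_ne_zero_iff.mpr hna1) (norm_ne_zero_iff.mpr hna2)]
  have hlog2 : Real.log (‖t - (starRingEnd ℂ) ξ‖) =
      Real.log (‖zsqrt t - zsqrt ((starRingEnd ℂ) ξ)‖)
        + Real.log (‖zsqrt t + zsqrt ((starRingEnd ℂ) ξ)‖) := by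
    rw [hfac2, norm_mul, Real.log_mul (norm_ne_zero_iff.mpr hnb1) (norm_ne_zero_iff.mpr hnb2)]
  rw [ZH, hlog1, hlog2]; ring

lemma ZH_polar (ξ : ℂ) (hξ0 : ξ ≠ 0) (ρ θ : ℝ) (hρ : 0 ≤ ρ) (hρ2 : ρ < ‖ξ‖)
    (h1 : -Real.pi ≤ θ) (h2 : θ ≤ 0) :
    ZH ((ρ:ℂ) * Complex.exp (Complex.I * θ)) ξ
      = gfun ξ (Complex.exp (Complex.I * ((θ/2 : ℝ) : ℂ))) (Real.sqrt ρ) := by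
  rw [ZH_eq ξ _ hξ0 (by rw [abs_polar ρ θ hρ]; exact hρ2)]
  rw [zsqrt_polar ρ θ hρ h1 h2]
  simp only [gfun, Llog, sub_neg_eq_add]
  norm_num

lemma ZHrad_eq (ξ : ℂ) (hξ0 : ξ ≠ 0) (θ ρ : ℝ) (h1 : -Real.pi ≤ θ) (h2 : θ ≤ 0)
    (hρ : 0 < ρ) (hρ2 : ρ < ‖ξ‖) :
    ZHrad ξ θ ρ = gd ξ (Complex.exp (Complex.I * ((θ/2 : ℝ) : ℂ))) (Real.sqrt ρ)
      * (1/(2 * Real.sqrt ρ)) := by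
  set c := Complex.exp (Complex.I * ((θ/2 : ℝ) : ℂ)) with hcdef
  have hc : ‖c‖ = 1 := abs_exp_I_half θ
  have hm : 0 < Real.sqrt (‖ξ‖) := Real.sqrt_pos.mpr (norm_pos_iff.mpr hξ0)
  have hslt : |Real.sqrt ρ| < Real.sqrt (‖ξ‖) := by
    rw [_root_.abs_of_nonneg (Real.sqrt_nonneg ρ)]
    exact Real.sqrt_lt_sqrt hρ.le hρ2
  have hsd : HasDerivAt (gfun ξ c) (gd ξ c (Real.sqrt ρ)) (Real.sqrt ρ) := by
    apply hasDerivAt_gfun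
    · exact sub_ne_far c _ _ _ hc (abs_zsqrt ξ) hslt
    · exact sub_ne_far c _ _ _ hc (by rw [norm_neg, abs_zsqrt]) hslt
    · exact sub_ne_far c _ _ _ hc (by rw [norm_neg, zsqrt_abs_eq]) hslt
    · exact sub_ne_far c _ _ _ hc (zsqrt_abs_eq ξ) hslt
  have hsq : HasDerivAt Real.sqrt (1/(2 * Real.sqrt ρ)) ρ := Real.hasDerivAt_sqrt hρ.ne'
  have htot := hsd.comp ρ hsq
  have heq : (fun r : ℝ => ZH ((r:ℂ) * Complex.exp (Complex.I * θ)) ξ)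
      =ᶠ[nhds ρ] (fun r : ℝ => gfun ξ c (Real.sqrt r)) := by
    filter_upwards [Ioo_mem_nhds hρ hρ2] with r hr
    exact ZH_polar ξ hξ0 r θ hr.1.le hr.2 h1 h2
  rw [ZHrad, heq.deriv_eq]
  exact htot.deriv

lemma gfun_bound (ξ c : ℂ) (hc : ‖c‖ = 1) (hξ0 : ξ ≠ 0) (s : ℝ)
    (hs0 : 0 ≤ s) (hs : s ≤ Real.sqrt (‖ξ‖) / 2) :
    |gfun ξ c s| ≤ (4/(Real.pi * Real.sqrt (‖ξ‖))) * s := by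
  set m := Real.sqrt (‖ξ‖) with hmdef
  have hm : 0 < m := Real.sqrt_pos.mpr (norm_pos_iff.mpr hξ0)
  have hder : ∀ x ∈ Set.Icc (0:ℝ) (m/2),
      HasDerivWithinAt (gfun ξ c) (gd ξ c x) (Set.Icc (0:ℝ) (m/2)) x := by
    intro x hx
    have hxb : |x| < m := by
      rw [_root_.abs_of_nonneg hx.1]; linarith [hx.2]
    refine (hasDerivAt_gfun ξ c x ?_ ?_ ?_ ?_).hasDerivWithinAt
    · exact sub_ne_far c _ _ _ hc (abs_zsqrt ξ) hxb
    · exact sub_ne_far c _ _ _ hc (by rw [norm_neg, abs_zsqrt]) hxb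
    · exact sub_ne_far c _ _ _ hc (by rw [norm_neg, zsqrt_abs_eq]) hxb
    · exact sub_ne_far c _ _ _ hc (zsqrt_abs_eq ξ) hxb
  have hbd : ∀ x ∈ Set.Icc (0:ℝ) (m/2), ‖gd ξ c x‖ ≤ 4/(Real.pi * m) := by
    intro x hx
    rw [Real.norm_eq_abs]
    exact gd_bound ξ c x hc hξ0 (by rw [_root_.abs_of_nonneg hx.1]; exact hx.2)
  have hmem0 : (0:ℝ) ∈ Set.Icc (0:ℝ) (m/2) := ⟨le_refl 0, by linarith⟩
  have hmems : s ∈ Set.Icc (0:ℝ) (m/2) := ⟨hs0, hs⟩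
  have := (convex_Icc (0:ℝ) (m/2)).norm_image_sub_le_of_norm_hasDerivWithin_le
    hder hbd hmem0 hmems
  simpa [gfun_zero, Real.norm_eq_abs, _root_.abs_of_nonneg hs0] using this

/-- Let ξ ≠ 0 with Im ξ < 0 and −1/2 < μ < 0.  If U is C¹ on the punctured
closed lower half-disc of radius |ξ|/2, with U(t) = o(|t|^μ) and radial derivative
o(ρ^{μ−1}) uniformly in θ ∈ [−π,0], then the Green-identity boundary integral over the
small semicircular arc Γ_δ tends to 0 as δ → 0⁺. -/
theorem small_arc_integral_tendsto_zero (ξ : ℂ) (hξim : ξ.im < 0) (hξ0 : ξ ≠ 0)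
    (μ : ℝ) (hμ1 : -(1/2 : ℝ) < μ) (hμ2 : μ < 0) (U : ℂ → ℂ)
    (hU : ContDiffOn ℝ 1 U
      {t : ℂ | t.im ≤ 0 ∧ 0 < ‖t‖ ∧ ‖t‖ ≤ ‖ξ‖ / 2})
    (hUo : ∀ ε > (0:ℝ), ∃ r > (0:ℝ), ∀ t : ℂ, t.im ≤ 0 → 0 < ‖t‖ →
      ‖t‖ < r → ‖U t‖ ≤ ε * ‖t‖ ^ μ)
    (hUd : ∀ ε > (0:ℝ), ∃ r > (0:ℝ), ∀ ρ θ : ℝ, 0 < ρ → ρ < r → -Real.pi ≤ θ → θ ≤ 0 →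
      ‖radDeriv U θ ρ‖ ≤ ε * ρ ^ (μ - 1)) :
    Filter.Tendsto
      (fun δ : ℝ => ∫ θ in (-Real.pi)..0,
        (U ((δ : ℂ) * Complex.exp (Complex.I * θ)) * (ZHrad ξ θ δ : ℂ) -
          (ZH ((δ : ℂ) * Complex.exp (Complex.I * θ)) ξ : ℂ) * radDeriv U θ δ) * (δ : ℂ))
      (nhdsWithin 0 (Set.Ioi 0)) (nhds 0) := by
  set m := Real.sqrt (‖ξ‖) with hmdef
  have hm : 0 < m := Real.sqrt_pos.mpr (norm_pos_iff.mpr hξ0)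
  set C := 4/(Real.pi * m) with hCdef
  have hC : 0 < C := by rw [hCdef]; positivity
  rw [NormedAddCommGroup.tendsto_nhds_zero]
  intro ε hε
  set ε₁ := ε / (2*C*Real.pi + 1) with hε₁def
  have hε₁ : 0 < ε₁ := by rw [hε₁def]; positivity
  obtain ⟨r₁, hr₁, hO⟩ := hUo ε₁ hε₁
  obtain ⟨r₂, hr₂, hD⟩ := hUd ε₁ hε₁
  set r := min (min r₁ r₂) (min (‖ξ‖ / 4) 1) with hrdef
  have hrpos : 0 < r :=
    lt_min (lt_min hr₁ hr₂) (lt_min (div_pos (norm_pos_iff.mpr hξ0) (by norm_num)) one_pos)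
  filter_upwards [Ioo_mem_nhdsGT_of_mem (Set.mem_Ico.mpr ⟨le_refl 0, hrpos⟩)] with δ hδ
  obtain ⟨hδ0, hδr⟩ := hδ
  have hδr₁ : δ < r₁ := lt_of_lt_of_le hδr ((min_le_left _ _).trans (min_le_left _ _))
  have hδr₂ : δ < r₂ := lt_of_lt_of_le hδr ((min_le_left _ _).trans (min_le_right _ _))
  have hδξ : δ < ‖ξ‖ / 4 :=
    lt_of_lt_of_le hδr ((min_le_right _ _).trans (min_le_left _ _))
  have hδ1 : δ < 1 := lt_of_lt_of_le hδr ((min_le_right _ _).trans (min_le_right _ _))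
  have hδabs : δ < ‖ξ‖ := by
    have := norm_pos_iff.mpr hξ0; linarith
  have hsqδpos : 0 < Real.sqrt δ := Real.sqrt_pos.mpr hδ0
  have hsqhalf : Real.sqrt δ ≤ m / 2 := by
    have h4 : Real.sqrt (‖ξ‖ / 4) = m / 2 := by
      rw [Real.sqrt_div (norm_nonneg ξ), hmdef,
        show (4:ℝ) = 2^2 by norm_num, Real.sqrt_sq (by norm_num : (0:ℝ) ≤ 2)]
    rw [← h4]
    exact Real.sqrt_le_sqrt hδξ.le
  have e1 : δ ^ μ * (1/(2*Real.sqrt δ)) * δ = δ ^ (μ + 1/2) / 2 := by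
    rw [Real.sqrt_eq_rpow, show μ + 1/2 = μ + 1 - 1/2 by ring, Real.rpow_sub hδ0,
      Real.rpow_add hδ0, Real.rpow_one]
    have hne : δ ^ ((1:ℝ)/2) ≠ 0 := (Real.rpow_pos_of_pos hδ0 _).ne'
    field_simp
  have e2 : Real.sqrt δ * δ ^ (μ - 1) * δ = δ ^ (μ + 1/2) := by
    rw [Real.sqrt_eq_rpow, show μ + 1/2 = 1/2 + (μ - 1) + 1 by ring, Real.rpow_add hδ0,
      Real.rpow_add hδ0, Real.rpow_one]
  have hptwise : ∀ θ ∈ Set.uIoc (-Real.pi) (0:ℝ),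
      ‖(U ((δ:ℂ) * Complex.exp (Complex.I * θ)) * ((ZHrad ξ θ δ : ℝ) : ℂ) -
        ((ZH ((δ:ℂ) * Complex.exp (Complex.I * θ)) ξ : ℝ) : ℂ) * radDeriv U θ δ) * (δ:ℂ)‖
        ≤ (3/2) * C * ε₁ * δ ^ (μ + 1/2) := by
    intro θ hθ
    rw [Set.uIoc_of_le (by linarith [Real.pi_pos] : -Real.pi ≤ (0:ℝ))] at hθ
    obtain ⟨hθ1, hθ2⟩ := hθ
    set c := Complex.exp (Complex.I * ((θ/2 : ℝ) : ℂ)) with hcdef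
    have hc : ‖c‖ = 1 := abs_exp_I_half θ
    have hUb : ‖U ((δ:ℂ) * Complex.exp (Complex.I * θ))‖ ≤ ε₁ * δ ^ μ := by
      have him : ((δ:ℂ) * Complex.exp (Complex.I * θ)).im ≤ 0 := by
        rw [im_polar]
        exact mul_nonpos_of_nonneg_of_nonpos hδ0.le
          (Real.sin_nonpos_of_nonpos_of_neg_pi_le hθ2 hθ1.le)
      have habs : ‖(δ:ℂ) * Complex.exp (Complex.I * θ)‖ = δ := abs_polar δ θ hδ0.le
      have := hO _ him (by rw [habs]; exact hδ0) (by rw [habs]; exact hδr₁)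
      rwa [habs] at this
    have hDb : ‖radDeriv U θ δ‖ ≤ ε₁ * δ ^ (μ - 1) := hD δ θ hδ0 hδr₂ hθ1.le hθ2
    have hZHb : |ZH ((δ:ℂ) * Complex.exp (Complex.I * θ)) ξ| ≤ C * Real.sqrt δ := by
      rw [ZH_polar ξ hξ0 δ θ hδ0.le hδabs hθ1.le hθ2, hCdef]
      exact gfun_bound ξ c hc hξ0 _ (Real.sqrt_nonneg δ) hsqhalf
    have hZrb : |ZHrad ξ θ δ| ≤ C * (1/(2*Real.sqrt δ)) := by
      rw [ZHrad_eq ξ hξ0 θ δ hθ1.le hθ2 hδ0 hδabs, abs_mul,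
        _root_.abs_of_pos (show (0:ℝ) < 1/(2*Real.sqrt δ) by positivity), hCdef]
      gcongr
      exact gd_bound ξ c _ hc hξ0
        (by rw [_root_.abs_of_nonneg (Real.sqrt_nonneg δ)]; exact hsqhalf)
    have hnormδ : ‖((δ:ℝ):ℂ)‖ = δ := by
      rw [Complex.norm_real, Real.norm_eq_abs, _root_.abs_of_pos hδ0]
    calc ‖(U ((δ:ℂ) * Complex.exp (Complex.I * θ)) * ((ZHrad ξ θ δ : ℝ) : ℂ) -
        ((ZH ((δ:ℂ) * Complex.exp (Complex.I * θ)) ξ : ℝ) : ℂ) * radDeriv U θ δ) * (δ:ℂ)‖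
        = ‖U ((δ:ℂ) * Complex.exp (Complex.I * θ)) * ((ZHrad ξ θ δ : ℝ) : ℂ) -
          ((ZH ((δ:ℂ) * Complex.exp (Complex.I * θ)) ξ : ℝ) : ℂ) * radDeriv U θ δ‖ * δ := by
            rw [norm_mul, hnormδ]
    _ ≤ (‖U ((δ:ℂ) * Complex.exp (Complex.I * θ))‖ * |ZHrad ξ θ δ| +
          |ZH ((δ:ℂ) * Complex.exp (Complex.I * θ)) ξ| * ‖radDeriv U θ δ‖) * δ := by
        apply mul_le_mul_of_nonneg_right _ hδ0.le
        calc ‖U ((δ:ℂ) * Complex.exp (Complex.I * θ)) * ((ZHrad ξ θ δ : ℝ) : ℂ) -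
            ((ZH ((δ:ℂ) * Complex.exp (Complex.I * θ)) ξ : ℝ) : ℂ) * radDeriv U θ δ‖
            ≤ ‖U ((δ:ℂ) * Complex.exp (Complex.I * θ)) * ((ZHrad ξ θ δ : ℝ) : ℂ)‖ +
              ‖((ZH ((δ:ℂ) * Complex.exp (Complex.I * θ)) ξ : ℝ) : ℂ) * radDeriv U θ δ‖ :=
            norm_sub_le _ _
        _ = ‖U ((δ:ℂ) * Complex.exp (Complex.I * θ))‖ * |ZHrad ξ θ δ| +
              |ZH ((δ:ℂ) * Complex.exp (Complex.I * θ)) ξ| * ‖radDeriv U θ δ‖ := by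
            rw [norm_mul, norm_mul, Complex.norm_real, Complex.norm_real,
              Real.norm_eq_abs, Real.norm_eq_abs]
    _ ≤ ((ε₁ * δ ^ μ) * (C * (1/(2*Real.sqrt δ))) + (C * Real.sqrt δ) * (ε₁ * δ ^ (μ-1))) * δ := by
        apply mul_le_mul_of_nonneg_right _ hδ0.le
        exact add_le_add
          (mul_le_mul hUb hZrb (abs_nonneg _) (by positivity))
          (mul_le_mul hZHb hDb (norm_nonneg _) (by positivity))
    _ = (3/2) * C * ε₁ * δ ^ (μ + 1/2) := by
        linear_combination (C*ε₁) * e1 + (C*ε₁) * e2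
  have hint := intervalIntegral.norm_integral_le_of_norm_le_const hptwise
  have hpi : |(0:ℝ) - (-Real.pi)| = Real.pi := by
    rw [sub_neg_eq_add, zero_add, _root_.abs_of_pos Real.pi_pos]
  rw [hpi] at hint
  have hrp1 : δ ^ (μ + 1/2) ≤ 1 := Real.rpow_le_one hδ0.le hδ1.le (by linarith)
  calc ‖∫ θ in (-Real.pi)..0,
        (U ((δ:ℂ) * Complex.exp (Complex.I * θ)) * ((ZHrad ξ θ δ : ℝ) : ℂ) -
          ((ZH ((δ:ℂ) * Complex.exp (Complex.I * θ)) ξ : ℝ) : ℂ) * radDeriv U θ δ) * (δ:ℂ)‖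
      ≤ (3/2) * C * ε₁ * δ ^ (μ + 1/2) * Real.pi := hint
  _ ≤ (3/2) * C * ε₁ * 1 * Real.pi := by gcongr
  _ < ε := by
      rw [mul_one, hε₁def]
      have hden : (0:ℝ) < 2*C*Real.pi + 1 := by positivity
      have hkey : (3/2) * C * (ε / (2*C*Real.pi + 1)) * Real.pi
          < (2*C*Real.pi + 1) * (ε / (2*C*Real.pi + 1)) := by
        have hd : 0 < ε / (2*C*Real.pi + 1) := by positivity
        nlinarith [Real.pi_pos, hC]
      have hcanc : (2*C*Real.pi + 1) * (ε / (2*C*Real.pi + 1)) = ε := by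
        field_simp
      linarith
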